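/- arXiv:1903.06858 — 3 statements merged into one kernel-verified Lean document; each statement's English description precedes it below -/
import Mathlib

section
/- Let H be a real Hilbert space, T, A compact operators on H with w(T) ≠ 0, and suppose M_{w(T)} = D ∪ (-D) where D ⊆ S_H is connected. Then T ⊥_w A if and only if there exists a unit vector z with |⟨Tz,z⟩| = w(T) and ⟨Az,z⟩ = 0. -/
open scoped RealInnerProductSpace

/-- Numerical radius of a bounded linear operator on a real inner product space. -/
noncomputable def numRadius {E : Type*} [NormedAddCommGroup E] [InnerProductSpace ℝ E]
    (T : E →L[ℝ] E) : ℝ :=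
  sSup {r : ℝ | ∃ x : E, ‖x‖ = 1 ∧ r = |⟪T x, x⟫|}

/-- Numerical-radius orthogonality for real spaces: `T ⊥_w A`. -/
def nrOrth {E : Type*} [NormedAddCommGroup E] [InnerProductSpace ℝ E]
    (T A : E →L[ℝ] E) : Prop :=
  ∀ l : ℝ, numRadius T ≤ numRadius (T + l • A)

open Filter Topology

section Aux
variable {H : Type*} [NormedAddCommGroup H] [InnerProductSpace ℝ H]

lemma nr_bdd (B : H →L[ℝ] H) : BddAbove {r : ℝ | ∃ x : H, ‖x‖ = 1 ∧ r = |⟪B x, x⟫|} := by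
  refine ⟨‖B‖, ?_⟩
  rintro r ⟨x, hx, rfl⟩
  calc |⟪B x, x⟫| ≤ ‖B x‖ * ‖x‖ := abs_real_inner_le_norm _ _
    _ ≤ ‖B‖ * ‖x‖ * ‖x‖ := by
        have := B.le_opNorm x
        nlinarith [norm_nonneg x]
    _ = ‖B‖ := by rw [hx]; ring

lemma nr_le (B : H →L[ℝ] H) {x : H} (hx : ‖x‖ = 1) : |⟪B x, x⟫| ≤ numRadius B :=
  le_csSup (nr_bdd B) ⟨x, hx, rfl⟩

lemma nr_quad (B : H →L[ℝ] H) (y : H) : |⟪B y, y⟫| ≤ ‖B‖ * ‖y‖ ^ 2 := by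
  calc |⟪B y, y⟫| ≤ ‖B y‖ * ‖y‖ := abs_real_inner_le_norm _ _
    _ ≤ ‖B‖ * ‖y‖ * ‖y‖ := by
        have := B.le_opNorm y
        nlinarith [norm_nonneg y]
    _ = ‖B‖ * ‖y‖ ^ 2 := by ring

lemma nr_quad' (B : H →L[ℝ] H) {w : ℝ} (hw : ∀ x : H, ‖x‖ = 1 → |⟪B x, x⟫| ≤ w) (y : H) :
    |⟪B y, y⟫| ≤ w * ‖y‖ ^ 2 := by
  rcases eq_or_ne y 0 with rfl | hy
  · simp
  · have hny : (0 : ℝ) < ‖y‖ := norm_pos_iff.mpr hy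
    have hu : ‖(‖y‖⁻¹ • y : H)‖ = 1 := by
      rw [norm_smul, norm_inv, norm_norm]
      field_simp
    have h1 := hw _ hu
    have h2 : ⟪B (‖y‖⁻¹ • y), (‖y‖⁻¹ • y)⟫ = ‖y‖⁻¹ * (‖y‖⁻¹ * ⟪B y, y⟫) := by
      rw [map_smul, real_inner_smul_left, real_inner_smul_right]
    rw [h2] at h1
    rw [abs_mul, abs_mul, abs_inv, abs_norm] at h1
    have h3 : ‖y‖⁻¹ * (‖y‖⁻¹ * |⟪B y, y⟫|) ≤ w := h1
    calc |⟪B y, y⟫| = ‖y‖ ^ 2 * (‖y‖⁻¹ * (‖y‖⁻¹ * |⟪B y, y⟫|)) := by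
          field_simp
      _ ≤ ‖y‖ ^ 2 * w := by
          apply mul_le_mul_of_nonneg_left h3 (by positivity)
      _ = w * ‖y‖ ^ 2 := by ring

lemma subseq_img (B : H →L[ℝ] H) (hB : IsCompactOperator B) (y : ℕ → H)
    (hy : ∀ n, ‖y n‖ ≤ 1) :
    ∃ ψ : ℕ → ℕ, StrictMono ψ ∧ ∃ l : H, Tendsto (fun n => B (y (ψ n))) atTop (𝓝 l) := by
  have hK : IsCompact (closure (B '' Metric.closedBall 0 1)) :=
    hB.isCompact_closure_image_closedBall 1
  have hmem : ∀ n, B (y n) ∈ closure (B '' Metric.closedBall 0 1) := fun n =>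
    subset_closure ⟨y n, by simpa using hy n, rfl⟩
  obtain ⟨l, _, ψ, hψ, hl⟩ := hK.tendsto_subseq hmem
  exact ⟨ψ, hψ, l, hl⟩

variable [CompleteSpace H]

lemma adj_subseq (T : H →L[ℝ] H) (hT : IsCompactOperator T) (y : ℕ → H)
    (hy : ∀ n, ‖y n‖ ≤ 1) :
    ∃ ψ : ℕ → ℕ, StrictMono ψ ∧
      ∃ l : H, Tendsto (fun n => (ContinuousLinearMap.adjoint T) (y (ψ n))) atTop (𝓝 l) := by
  set A := ContinuousLinearMap.adjoint T with hAdef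
  have hTA : IsCompactOperator (T ∘ A) := hT.comp_clm A
  have hTA' : IsCompactOperator ((T.comp A : H →L[ℝ] H) : H → H) := hTA
  obtain ⟨ψ, hψ, l, hl⟩ := subseq_img (T.comp A) hTA' y hy
  have hkey : ∀ a b : H, ‖a‖ ≤ 1 → ‖b‖ ≤ 1 →
      ‖A a - A b‖ ^ 2 ≤ 2 * ‖(T.comp A) a - (T.comp A) b‖ := by
    intro a b ha hb
    have h1 : ‖A a - A b‖ ^ 2 = ⟪(T.comp A) a - (T.comp A) b, a - b⟫ := by
      rw [← real_inner_self_eq_norm_sq]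
      have : A a - A b = A (a - b) := (map_sub A a b).symm
      rw [this]
      have h2 : ⟪A (a - b), A (a - b)⟫ = ⟪T (A (a - b)), a - b⟫ := by
        rw [ContinuousLinearMap.adjoint_inner_left T (A (a - b)) (a - b)]
        exact real_inner_comm _ _
      rw [h2]
      congr 1
      simp [ContinuousLinearMap.comp_apply, map_sub]
    rw [h1]
    calc ⟪(T.comp A) a - (T.comp A) b, a - b⟫
        ≤ ‖(T.comp A) a - (T.comp A) b‖ * ‖a - b‖ := real_inner_le_norm _ _
      _ ≤ ‖(T.comp A) a - (T.comp A) b‖ * 2 := by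
          have : ‖a - b‖ ≤ 2 := by
            calc ‖a - b‖ ≤ ‖a‖ + ‖b‖ := norm_sub_le _ _
              _ ≤ 2 := by linarith
          nlinarith [norm_nonneg ((T.comp A) a - (T.comp A) b)]
      _ = 2 * ‖(T.comp A) a - (T.comp A) b‖ := by ring
  have hCauchy : CauchySeq (fun n => A (y (ψ n))) := by
    rw [Metric.cauchySeq_iff']
    intro ε hε
    have hc : CauchySeq (fun n => (T.comp A) (y (ψ n))) := hl.cauchySeq
    rw [Metric.cauchySeq_iff'] at hc
    obtain ⟨N, hN⟩ := hc (ε ^ 2 / 2) (by positivity)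
    refine ⟨N, fun n hn => ?_⟩
    have h1 := hkey (y (ψ n)) (y (ψ N)) (hy _) (hy _)
    have h2 := hN n hn
    rw [dist_eq_norm] at h2 ⊢
    nlinarith [norm_nonneg (A (y (ψ n)) - A (y (ψ N)))]
  obtain ⟨l2, hl2⟩ := cauchySeq_tendsto_of_complete hCauchy
  exact ⟨ψ, hψ, l2, hl2⟩

end Aux

lemma key_arith (w ε η P Q a : ℝ) (ha : 0 < a) (hεsq : ε * ε = 1) (hε1 : |ε| = 1)
    (hP : |P| ≤ w) (hlt : w - (1 / a) ^ 2 < |P + -(ε * η) / a * Q|)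
    (hpos : 0 < ε * (P + -(ε * η) / a * Q)) : η * Q < 1 / a := by
  have h2 : |P + -(ε * η) / a * Q| = ε * (P + -(ε * η) / a * Q) := by
    rw [← abs_of_pos hpos, abs_mul, hε1, one_mul]
  have h3 : ε * (P + -(ε * η) / a * Q) = ε * P - η / a * Q := by
    field_simp
    linear_combination (-(Q * η)) * hεsq
  have h4 : ε * P ≤ w := by
    have h5 : ε * P ≤ |ε * P| := le_abs_self _
    rw [abs_mul, hε1, one_mul] at h5
    exact h5.trans hP
  have h6 : η / a * Q < (1 / a) ^ 2 := by
    rw [h2, h3] at hlt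
    linarith
  have h7 : (η * Q) / a < (1 / a) ^ 2 := by
    have : η / a * Q = (η * Q) / a := by ring
    linarith [this ▸ h6]
  rw [div_lt_iff₀ ha] at h7
  calc η * Q < (1 / a) ^ 2 * a := h7
    _ = 1 / a := by field_simp

set_option maxHeartbeats 1600000 in
theorem stmt10 {H : Type*} [NormedAddCommGroup H] [InnerProductSpace ℝ H] [CompleteSpace H]
    (T A : H →L[ℝ] H) (hT : IsCompactOperator T) (hA : IsCompactOperator A)
    (hw : numRadius T ≠ 0) (D : Set H) (hD : D ⊆ Metric.sphere (0 : H) 1)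
    (hconn : IsConnected D)
    (hM : {x : H | ‖x‖ = 1 ∧ |⟪T x, x⟫| = numRadius T} = D ∪ (-D)) :
    nrOrth T A ↔ ∃ z : H, ‖z‖ = 1 ∧ |⟪T z, z⟫| = numRadius T ∧ ⟪A z, z⟫ = 0 := by
  set w := numRadius T with hwdef
  have hMmem : ∀ x : H, x ∈ D ∪ (-D) → ‖x‖ = 1 ∧ |⟪T x, x⟫| = w := by
    intro x hx
    rw [← hM] at hx
    exact hx
  have hMmem' : ∀ x : H, ‖x‖ = 1 → |⟪T x, x⟫| = w → x ∈ D ∪ (-D) := by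
    intro x h1 h2
    rw [← hM]
    exact ⟨h1, h2⟩
  obtain ⟨d, hd⟩ := hconn.nonempty
  have hdM := hMmem d (Or.inl hd)
  have hwpos : 0 < w := (hdM.2 ▸ abs_nonneg _).lt_of_ne' hw
  constructor
  · -- forward direction
    intro horth
    by_contra hcon
    push_neg at hcon
    -- sign constancy
    have signlem : ∀ B : H →L[ℝ] H, (∀ x ∈ D, ⟪B x, x⟫ ≠ 0) →
        ∃ ε : ℝ, (ε = 1 ∨ ε = -1) ∧ ∀ x ∈ D ∪ (-D), 0 < ε * ⟪B x, x⟫ := by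
      intro B hB
      have hBc : Continuous fun x : H => ⟪B x, x⟫ := B.continuous.inner continuous_id
      have hneg : ∀ x : H, ⟪B (-x), -x⟫ = ⟪B x, x⟫ := by
        intro x; rw [map_neg, inner_neg_neg]
      have hsub : D ⊆ (fun x : H => ⟪B x, x⟫) ⁻¹' (Set.Iio 0) ∪
          (fun x : H => ⟪B x, x⟫) ⁻¹' (Set.Ioi 0) := by
        intro x hx
        rcases (hB x hx).lt_or_gt with h | h
        · exact Or.inl h
        · exact Or.inr h
      have hdisj : Disjoint ((fun x : H => ⟪B x, x⟫) ⁻¹' (Set.Iio 0))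
          ((fun x : H => ⟪B x, x⟫) ⁻¹' (Set.Ioi 0)) := by
        rw [Set.disjoint_left]
        intro x h1 h2
        simp only [Set.mem_preimage, Set.mem_Iio, Set.mem_Ioi] at h1 h2
        linarith
      rcases hconn.isPreconnected.subset_or_subset
          (isOpen_Iio.preimage hBc) (isOpen_Ioi.preimage hBc) hdisj hsub with h | h
      · refine ⟨-1, Or.inr rfl, ?_⟩
        rintro x (hx | hx)
        · have := h hx; simp only [Set.mem_preimage, Set.mem_Iio] at this; linarith
        · have hnx : -x ∈ D := by rwa [Set.mem_neg] at hx
          have := h hnx; simp only [Set.mem_preimage, Set.mem_Iio] at this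
          rw [hneg] at this; linarith
      · refine ⟨1, Or.inl rfl, ?_⟩
        rintro x (hx | hx)
        · have := h hx; simp only [Set.mem_preimage, Set.mem_Ioi] at this; linarith
        · have hnx : -x ∈ D := by rwa [Set.mem_neg] at hx
          have := h hnx; simp only [Set.mem_preimage, Set.mem_Ioi] at this
          rw [hneg] at this; linarith
    obtain ⟨ε, hε, hεT⟩ := signlem T (by
      intro x hx h0
      have hxM := hMmem x (Or.inl hx)
      rw [h0] at hxM
      simp at hxM
      exact absurd hxM.2.symm (ne_of_gt hwpos))
    obtain ⟨η, hη, hηA⟩ := signlem A (by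
      intro x hx
      have hxM := hMmem x (Or.inl hx)
      exact hcon x hxM.1 hxM.2)
    have hε1 : |ε| = 1 := by rcases hε with rfl | rfl <;> norm_num
    have hη1 : |η| = 1 := by rcases hη with rfl | rfl <;> norm_num
    have hεsq : ε * ε = 1 := by rcases hε with rfl | rfl <;> norm_num
    have hTval : ∀ x ∈ D ∪ (-D), ⟪T x, x⟫ = ε * w := by
      intro x hx
      have h1 := (hMmem x hx).2
      have h2 := hεT x hx
      rcases hε with rfl | rfl
      · rw [one_mul] at h2 ⊢; rw [← h1, abs_of_pos h2]
      · have : ⟪T x, x⟫ < 0 := by nlinarith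
        rw [← h1, abs_of_neg this]; ring
    -- construct approximate maximizers
    have hexists : ∀ n : ℕ, ∃ x : H, ‖x‖ = 1 ∧
        w - (1 / ((n : ℝ) + 1)) ^ 2 <
          |⟪T x, x⟫ + (-(ε * η) / ((n : ℝ) + 1)) * ⟪A x, x⟫| := by
      intro n
      set l : ℝ := -(ε * η) / ((n : ℝ) + 1) with hl
      have h1 : w ≤ numRadius (T + l • A) := horth l
      have h2 : w - (1 / ((n : ℝ) + 1)) ^ 2 < numRadius (T + l • A) := by
        have : (0 : ℝ) < (1 / ((n : ℝ) + 1)) ^ 2 := by positivity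
        linarith
      have hne : {r : ℝ | ∃ x : H, ‖x‖ = 1 ∧ r = |⟪(T + l • A) x, x⟫|}.Nonempty :=
        ⟨_, d, hdM.1, rfl⟩
      obtain ⟨r, hr, hrgt⟩ := exists_lt_of_lt_csSup hne h2
      obtain ⟨x, hx1, rfl⟩ := hr
      refine ⟨x, hx1, ?_⟩
      have hcalc : ⟪(T + l • A) x, x⟫ = ⟪T x, x⟫ + l * ⟪A x, x⟫ := by
        simp [ContinuousLinearMap.add_apply, ContinuousLinearMap.smul_apply,
          inner_add_left, real_inner_smul_left]
      rw [hcalc] at hrgt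
      exact hrgt
    choose x hx1 hx2 using hexists
    have hp_le : ∀ n, |⟪T (x n), x n⟫| ≤ w := fun n => nr_le T (hx1 n)
    have hq_le : ∀ n, |⟪A (x n), x n⟫| ≤ ‖A‖ := by
      intro n
      have := nr_quad A (x n)
      rw [hx1 n] at this
      simpa using this
    have hlabs : ∀ n : ℕ, |(-(ε * η) / ((n : ℝ) + 1))| = 1 / ((n : ℝ) + 1) := by
      intro n
      rw [abs_div, abs_neg, abs_mul, hε1, hη1]
      rw [abs_of_pos (by positivity : (0:ℝ) < (n : ℝ) + 1)]
      ring
    have hplow : ∀ n : ℕ, w - ((1 / ((n : ℝ) + 1)) ^ 2 + ‖A‖ * (1 / ((n : ℝ) + 1)))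
        ≤ |⟪T (x n), x n⟫| := by
      intro n
      have h1 := hx2 n
      have h2 : |⟪T (x n), x n⟫ + (-(ε * η) / ((n : ℝ) + 1)) * ⟪A (x n), x n⟫|
          ≤ |⟪T (x n), x n⟫| + (1 / ((n : ℝ) + 1)) * ‖A‖ := by
        calc _ ≤ |⟪T (x n), x n⟫| + |(-(ε * η) / ((n : ℝ) + 1)) * ⟪A (x n), x n⟫| :=
              abs_add_le _ _
          _ ≤ _ := by
              rw [abs_mul, hlabs n]
              have := hq_le n
              have h3 : (0:ℝ) ≤ 1 / ((n : ℝ) + 1) := by positivity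
              nlinarith
      nlinarith
    -- Bolzano-Weierstrass for the real sequence
    set p : ℕ → ℝ := fun n => ⟪T (x n), x n⟫ with hpdef
    have hpmem : ∀ n, p n ∈ Set.Icc (-w) w := by
      intro n
      have := abs_le.mp (hp_le n)
      exact ⟨this.1, this.2⟩
    obtain ⟨t, _, φ, hφ, hpt⟩ := (isCompact_Icc (a := -w) (b := w)).tendsto_subseq hpmem
    have hone : Tendsto (fun n : ℕ => 1 / ((n : ℝ) + 1)) atTop (𝓝 0) :=
      tendsto_one_div_add_atTop_nhds_zero_nat
    have honeφ : Tendsto (fun n : ℕ => 1 / ((φ n : ℝ) + 1)) atTop (𝓝 0) :=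
      hone.comp hφ.tendsto_atTop
    have habs_t : |t| = w := by
      have h1 : Tendsto (fun n => |p (φ n)|) atTop (𝓝 |t|) := hpt.abs
      have hub : |t| ≤ w := le_of_tendsto h1 (Eventually.of_forall fun n => hp_le _)
      have hlb : w ≤ |t| := by
        have h2 : Tendsto (fun n => w - ((1 / ((φ n : ℝ) + 1)) ^ 2
            + ‖A‖ * (1 / ((φ n : ℝ) + 1)))) atTop (𝓝 w) := by
          have := ((honeφ.pow 2).add ((tendsto_const_nhds (x := ‖A‖) (f := atTop)).mul honeφ)).const_sub w
          simpa using this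
        exact le_of_tendsto_of_tendsto h2 h1 (Eventually.of_forall fun n => hplow _)
      linarith
    have ht0 : t ≠ 0 := by
      intro h; rw [h] at habs_t; simp at habs_t; exact absurd habs_t.symm (ne_of_gt hwpos)
    -- extract strongly convergent subsequence via compactness
    obtain ⟨φ₂, hφ₂, u, hu⟩ := subseq_img T hT (fun n => x (φ n))
      (fun n => le_of_eq (hx1 _))
    obtain ⟨φ₃, hφ₃, v, hv⟩ := adj_subseq T hT (fun n => x (φ (φ₂ n)))
      (fun n => le_of_eq (hx1 _))
    set Tad := ContinuousLinearMap.adjoint T with hTaddef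
    set N : ℕ → ℕ := fun n => φ (φ₂ (φ₃ n)) with hNdef
    have hNmono : StrictMono N := hφ.comp (hφ₂.comp hφ₃)
    set X : ℕ → H := fun n => x (N n) with hXdef
    have hTX : Tendsto (fun n => T (X n)) atTop (𝓝 u) := hu.comp hφ₃.tendsto_atTop
    have hTadX : Tendsto (fun n => Tad (X n)) atTop (𝓝 v) := hv
    have hpX : Tendsto (fun n => ⟪T (X n), X n⟫) atTop (𝓝 t) :=
      hpt.comp (hφ₂.comp hφ₃).tendsto_atTop
    set Sv : H → H := fun y => (2⁻¹ : ℝ) • (T y + Tad y) with hSvdef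
    have hSX : Tendsto (fun n => Sv (X n)) atTop (𝓝 ((2⁻¹ : ℝ) • (u + v))) :=
      (hTX.add hTadX).const_smul _
    have hSinner : ∀ y : H, ⟪Sv y, y⟫ = ⟪T y, y⟫ := by
      intro y
      have h1 : ⟪Tad y, y⟫ = ⟪T y, y⟫ := by
        rw [ContinuousLinearMap.adjoint_inner_left]
        exact real_inner_comm _ _
      simp only [hSvdef, real_inner_smul_left, inner_add_left, h1]
      ring
    have hSsym : ∀ y z : H, ⟪Sv y, z⟫ = ⟪y, Sv z⟫ := by
      intro y z
      have h1 : ⟪Tad y, z⟫ = ⟪y, T z⟫ := ContinuousLinearMap.adjoint_inner_left T z y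
      have h2 : ⟪y, Tad z⟫ = ⟪T y, z⟫ := ContinuousLinearMap.adjoint_inner_right T y z
      simp only [hSvdef, real_inner_smul_left, real_inner_smul_right, inner_add_left,
        inner_add_right, h1, h2]
      ring
    have hSquad : ∀ y : H, |⟪Sv y, y⟫| ≤ w * ‖y‖ ^ 2 := by
      intro y
      rcases eq_or_ne y 0 with rfl | hy
      · simp
      · have hny : (0 : ℝ) < ‖y‖ := norm_pos_iff.mpr hy
        have hyu : ‖(‖y‖⁻¹ • y : H)‖ = 1 := by
          rw [norm_smul, norm_inv, norm_norm]; field_simp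
        have h1 : |⟪T (‖y‖⁻¹ • y), (‖y‖⁻¹ • y)⟫| ≤ w := nr_le T hyu
        have h2 : ⟪T (‖y‖⁻¹ • y), (‖y‖⁻¹ • y)⟫ = ‖y‖⁻¹ * (‖y‖⁻¹ * ⟪T y, y⟫) := by
          rw [map_smul, real_inner_smul_left, real_inner_smul_right]
        rw [h2, abs_mul, abs_mul, abs_inv, abs_norm] at h1
        rw [hSinner]
        calc |⟪T y, y⟫| = ‖y‖ ^ 2 * (‖y‖⁻¹ * (‖y‖⁻¹ * |⟪T y, y⟫|)) := by
              field_simp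
          _ ≤ ‖y‖ ^ 2 * w := mul_le_mul_of_nonneg_left h1 (by positivity)
          _ = w * ‖y‖ ^ 2 := by ring
    have hSnorm : ∀ y : H, ‖y‖ = 1 → ‖Sv y‖ ≤ w := by
      intro y hy
      rcases eq_or_ne (Sv y) 0 with h0 | h0
      · rw [h0, norm_zero]; exact le_of_lt hwpos
      · have hnz : (0 : ℝ) < ‖Sv y‖ := norm_pos_iff.mpr h0
        set z : H := ‖Sv y‖⁻¹ • Sv y with hzdef
        have hz : ‖z‖ = 1 := by rw [hzdef, norm_smul, norm_inv, norm_norm]; field_simp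
        have h1 : ⟪Sv y, z⟫ = ‖Sv y‖ := by
          rw [hzdef, real_inner_smul_right, real_inner_self_eq_norm_sq]
          field_simp
        have hadd : Sv (y + z) = Sv y + Sv z := by
          simp only [hSvdef, map_add, smul_add]
          module
        have hsubz : Sv (y - z) = Sv y - Sv z := by
          simp only [hSvdef, map_sub, smul_sub]
          module
        have hsymz : ⟪Sv z, y⟫ = ⟪Sv y, z⟫ := by
          rw [hSsym z y, real_inner_comm]
        have hpol : ⟪Sv (y + z), y + z⟫ - ⟪Sv (y - z), y - z⟫ = 4 * ⟪Sv y, z⟫ := by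
          rw [hadd, hsubz]
          simp only [inner_add_left, inner_add_right, inner_sub_left, inner_sub_right]
          rw [hsymz]
          ring
        have hb1 := abs_le.mp (hSquad (y + z))
        have hb2 := abs_le.mp (hSquad (y - z))
        have hpar1 : ‖y + z‖ ^ 2 = ‖y‖ ^ 2 + 2 * ⟪y, z⟫ + ‖z‖ ^ 2 :=
          norm_add_sq_real y z
        have hpar2 : ‖y - z‖ ^ 2 = ‖y‖ ^ 2 - 2 * ⟪y, z⟫ + ‖z‖ ^ 2 :=
          norm_sub_sq_real y z
        have : 4 * ‖Sv y‖ ≤ 4 * w := by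
          rw [← h1, ← hpol]
          have e1 : w * ‖y + z‖ ^ 2 + w * ‖y - z‖ ^ 2 = 4 * w := by
            rw [hpar1, hpar2, hy, hz]; ring
          linarith [hb1.2, hb2.1]
        linarith
    -- the limit point z
    have htsq : t ^ 2 = w ^ 2 := by
      rw [← sq_abs t, habs_t]
    have hdiff : Tendsto (fun n => ‖Sv (X n) - t • X n‖ ^ 2) atTop (𝓝 0) := by
      have hbound : ∀ n, ‖Sv (X n) - t • X n‖ ^ 2 ≤ w ^ 2 - 2 * t * ⟪T (X n), X n⟫ + t ^ 2 := by
        intro n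
        have hexp : ∀ (a b : H) (c : ℝ), ‖a - c • b‖ ^ 2
            = ‖a‖ ^ 2 - 2 * (c * ⟪a, b⟫) + c ^ 2 * ‖b‖ ^ 2 := by
          intro a b c
          rw [norm_sub_sq_real, real_inner_smul_right, norm_smul, Real.norm_eq_abs,
            mul_pow, sq_abs]
        have he := hexp (Sv (X n)) (X n) t
        rw [he, hSinner, hx1]
        have h2 : ‖Sv (X n)‖ ≤ w := hSnorm _ (hx1 _)
        have h3 : (0:ℝ) ≤ ‖Sv (X n)‖ := norm_nonneg _
        nlinarith
      have hlim : Tendsto (fun n => w ^ 2 - 2 * t * ⟪T (X n), X n⟫ + t ^ 2) atTop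
          (𝓝 (w ^ 2 - 2 * t * t + t ^ 2)) := by
        exact (((tendsto_const_nhds (x := w ^ 2) (f := atTop)).sub
          ((tendsto_const_nhds (x := 2 * t) (f := atTop)).mul hpX)).add
          (tendsto_const_nhds (x := t ^ 2) (f := atTop)))
      have hval : w ^ 2 - 2 * t * t + t ^ 2 = 0 := by nlinarith
      rw [hval] at hlim
      exact squeeze_zero (fun n => sq_nonneg _) hbound hlim
    have hdiff' : Tendsto (fun n => Sv (X n) - t • X n) atTop (𝓝 0) := by
      rw [tendsto_zero_iff_norm_tendsto_zero]
      have h2 : Tendsto (fun n => Real.sqrt (‖Sv (X n) - t • X n‖ ^ 2)) atTop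
          (𝓝 (Real.sqrt 0)) := hdiff.sqrt
      simpa [Real.sqrt_sq (norm_nonneg _)] using h2
    have hXlim : Tendsto X atTop (𝓝 (t⁻¹ • (2⁻¹ : ℝ) • (u + v))) := by
      have h1 : Tendsto (fun n => t • X n) atTop (𝓝 ((2⁻¹ : ℝ) • (u + v))) := by
        have := hSX.sub hdiff'
        simpa using this
      have h2 := h1.const_smul t⁻¹
      simpa [smul_smul, inv_mul_cancel₀ ht0] using h2
    obtain ⟨z, hXlim⟩ : ∃ z : H, Tendsto X atTop (𝓝 z) := ⟨_, hXlim⟩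
    have hz1 : ‖z‖ = 1 := by
      have h1 : Tendsto (fun n => ‖X n‖) atTop (𝓝 ‖z‖) := hXlim.norm
      have h2 : Tendsto (fun n => ‖X n‖) atTop (𝓝 1) := by
        have he : (fun n => ‖X n‖) = fun _ : ℕ => (1 : ℝ) := funext fun n => hx1 (N n)
        rw [he]
        exact tendsto_const_nhds
      exact tendsto_nhds_unique h1 h2
    have hfc : Continuous fun y : H => ⟪T y, y⟫ := T.continuous.inner continuous_id
    have hgc : Continuous fun y : H => ⟪A y, y⟫ := A.continuous.inner continuous_id
    have hfz : ⟪T z, z⟫ = t :=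
      tendsto_nhds_unique ((hfc.tendsto z).comp hXlim) hpX
    have hzM : z ∈ D ∪ (-D) := hMmem' z hz1 (by rw [hfz]; exact habs_t)
    have hgz : Tendsto (fun n => ⟪A (X n), X n⟫) atTop (𝓝 ⟪A z, z⟫) :=
      (hgc.tendsto z).comp hXlim
    have hc_pos : 0 < η * ⟪A z, z⟫ := hηA z hzM
    have ht_val : t = ε * w := by rw [← hfz]; exact hTval z hzM
    -- the contradiction
    set q : ℕ → ℝ := fun n => ⟪A (X n), X n⟫ with hqdef
    set rseq : ℕ → ℝ := fun n =>
      ⟪T (X n), X n⟫ + (-(ε * η) / ((N n : ℝ) + 1)) * q n with hrdef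
    have hNge : ∀ n : ℕ, (n : ℝ) ≤ (N n : ℝ) := fun n => Nat.cast_le.mpr (hNmono.le_apply)
    have hcoef : Tendsto (fun n => -(ε * η) / ((N n : ℝ) + 1)) atTop (𝓝 0) := by
      refine squeeze_zero_norm (a := fun n : ℕ => 1 / ((n : ℝ) + 1)) (fun n => ?_) hone
      rw [Real.norm_eq_abs, hlabs (N n)]
      apply one_div_le_one_div_of_le (by positivity)
      linarith [hNge n]
    have hrt : Tendsto rseq atTop (𝓝 t) := by
      have h1 : Tendsto (fun n => (-(ε * η) / ((N n : ℝ) + 1)) * q n) atTop (𝓝 0) := by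
        have := hcoef.mul hgz
        simpa using this
      have h2 := hpX.add h1
      simpa using h2
    have hεt : ε * t = w := by rw [ht_val, ← mul_assoc, hεsq, one_mul]
    have hεrt : Tendsto (fun n => ε * rseq n) atTop (𝓝 w) := by
      have := hrt.const_mul ε
      rwa [hεt] at this
    have hev : ∀ᶠ n in atTop, 0 < ε * rseq n :=
      hεrt.eventually (eventually_gt_nhds hwpos)
    have hgoal : ∀ᶠ n in atTop, η * q n ≤ 1 / ((n : ℝ) + 1) := by
      filter_upwards [hev] with n hn
      have ha : (0 : ℝ) < (N n : ℝ) + 1 := by positivity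
      have h1 : w - (1 / ((N n : ℝ) + 1)) ^ 2
          < |⟪T (X n), X n⟫ + -(ε * η) / ((N n : ℝ) + 1) * q n| := hx2 (N n)
      have h7 : η * q n < 1 / ((N n : ℝ) + 1) :=
        key_arith w ε η ⟪T (X n), X n⟫ (q n) ((N n : ℝ) + 1) ha hεsq hε1
          (hp_le (N n)) h1 hn
      have h9 : 1 / ((N n : ℝ) + 1) ≤ 1 / ((n : ℝ) + 1) := by
        apply one_div_le_one_div_of_le (by positivity)
        linarith [hNge n]
      linarith
    have hfinal : η * ⟪A z, z⟫ ≤ 0 :=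
      le_of_tendsto_of_tendsto (hgz.const_mul η) hone hgoal
    linarith
  · -- reverse direction
    rintro ⟨z, hz1, hz2, hz3⟩ l
    have h1 : |⟪(T + l • A) z, z⟫| ≤ numRadius (T + l • A) := nr_le _ hz1
    have hcalc : ⟪(T + l • A) z, z⟫ = ⟪T z, z⟫ := by
      simp [ContinuousLinearMap.add_apply, ContinuousLinearMap.smul_apply,
        inner_add_left, real_inner_smul_left, hz3]
    rw [hcalc, hz2] at h1
    exact h1
end

section
/- Let H be a real Hilbert space and x, y unit vectors in H. Then the rank-one operator x⊗x is numerical-radius orthogonal to y⊗y if and only if ⟨x,y⟩ = 0. -/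
open scoped RealInnerProductSpace

/-- The rank-one operator `u ⊗ v : z ↦ ⟪z, v⟫ u` on a real inner product space. -/
noncomputable def rankOne {E : Type*} [NormedAddCommGroup E] [InnerProductSpace ℝ E]
    (u v : E) : E →L[ℝ] E :=
  (innerSL ℝ v).smulRight u

lemma rankOne_inner {E : Type*} [NormedAddCommGroup E] [InnerProductSpace ℝ E]
    (u v z : E) : ⟪rankOne u v z, z⟫ = ⟪v, z⟫ * ⟪u, z⟫ := by
  simp [rankOne, real_inner_smul_left]

lemma key_ineq {E : Type*} [NormedAddCommGroup E] [InnerProductSpace ℝ E]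
    (x y z : E) (hx : ‖x‖ = 1) (hy : ‖y‖ = 1) (hz : ‖z‖ = 1) :
    (⟪y, z⟫ - ⟪x, y⟫ * ⟪x, z⟫)^2 ≤ (1 - ⟪x, z⟫^2) * (1 - ⟪x, y⟫^2) := by
  have h := real_inner_mul_inner_self_le (z - ⟪x, z⟫ • x) (y - ⟪x, y⟫ • x)
  have hxx : ⟪x, x⟫ = 1 := by
    rw [real_inner_self_eq_norm_sq, hx]; norm_num
  have hzz : ⟪z, z⟫ = 1 := by
    rw [real_inner_self_eq_norm_sq, hz]; norm_num
  have hyy : ⟪y, y⟫ = 1 := by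
    rw [real_inner_self_eq_norm_sq, hy]; norm_num
  simp only [inner_sub_left, inner_sub_right, real_inner_smul_left, real_inner_smul_right] at h
  rw [hxx, hzz, hyy] at h
  rw [show (⟪z,y⟫:ℝ) = ⟪y,z⟫ from real_inner_comm y z, show (⟪z,x⟫:ℝ) = ⟪x,z⟫ from real_inner_comm x z, show (⟪y,x⟫:ℝ) = ⟪x,y⟫ from real_inner_comm x y] at h
  nlinarith [h]

lemma num_ineq (a b c : ℝ) (ha : a^2 ≤ 1) (hb : b^2 ≤ 1) (hc : c^2 ≤ 1)
    (h : (b - c*a)^2 ≤ (1 - a^2) * (1 - c^2)) :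
    |a^2 - c^2/16 * b^2| ≤ 1 - c^4/64 := by
  rw [abs_le]
  constructor
  · nlinarith [sq_nonneg a, sq_nonneg b, sq_nonneg c, sq_nonneg (c^2)]
  · rcases le_or_gt (a^2) (1 - c^2/16) with h1 | h1
    · nlinarith [sq_nonneg b, sq_nonneg c, sq_nonneg (c^2), mul_nonneg (sq_nonneg c) (sq_nonneg b)]
    · nlinarith [sq_nonneg (b - c*a), sq_nonneg (b + c*a), sq_nonneg c, sq_nonneg (c*a), sq_nonneg (c^2), mul_nonneg (sq_nonneg c) (sq_nonneg b)]

lemma inner_sq_le_one {E : Type*} [NormedAddCommGroup E] [InnerProductSpace ℝ E]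
    (u v : E) (hu : ‖u‖ = 1) (hv : ‖v‖ = 1) : ⟪u, v⟫^2 ≤ 1 := by
  have h := real_inner_mul_inner_self_le u v
  have h1 : ⟪u, u⟫ = 1 := by rw [real_inner_self_eq_norm_sq, hu]; norm_num
  have h2 : ⟪v, v⟫ = 1 := by rw [real_inner_self_eq_norm_sq, hv]; norm_num
  nlinarith [h]

lemma pair_inner {E : Type*} [NormedAddCommGroup E] [InnerProductSpace ℝ E]
    (x y z : E) (l : ℝ) :
    ⟪(rankOne x x + l • rankOne y y) z, z⟫ = ⟪x, z⟫^2 + l * ⟪y, z⟫^2 := by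
  simp only [ContinuousLinearMap.add_apply, ContinuousLinearMap.smul_apply,
    inner_add_left, real_inner_smul_left, rankOne_inner]
  ring

lemma numRadius_rankOne_self {E : Type*} [NormedAddCommGroup E] [InnerProductSpace ℝ E]
    (x : E) (hx : ‖x‖ = 1) : numRadius (rankOne x x) = 1 := by
  have hxx : ⟪x, x⟫ = 1 := by rw [real_inner_self_eq_norm_sq, hx]; norm_num
  apply le_antisymm
  · apply Real.sSup_le _ zero_le_one
    rintro r ⟨z, hz, rfl⟩
    rw [rankOne_inner, abs_of_nonneg (mul_self_nonneg _), ← sq]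
    exact inner_sq_le_one x z hx hz
  · apply le_csSup
    · refine ⟨1, ?_⟩
      rintro r ⟨z, hz, rfl⟩
      rw [rankOne_inner, abs_of_nonneg (mul_self_nonneg _), ← sq]
      exact inner_sq_le_one x z hx hz
    · exact ⟨x, hx, by rw [rankOne_inner, hxx]; norm_num⟩

theorem stmt12 {H : Type*} [NormedAddCommGroup H] [InnerProductSpace ℝ H] [CompleteSpace H]
    (x y : H) (hx : ‖x‖ = 1) (hy : ‖y‖ = 1) :
    nrOrth (rankOne x x) (rankOne y y) ↔ ⟪x, y⟫ = 0 := by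
  constructor
  · intro horth
    by_contra hc
    have hc2 : 0 < ⟪x, y⟫^2 := by positivity
    have hcc : ⟪x, y⟫^2 ≤ 1 := inner_sq_le_one x y hx hy
    have h1 := horth (-(⟪x, y⟫^2/16))
    rw [numRadius_rankOne_self x hx] at h1
    have hub : numRadius (rankOne x x + (-(⟪x, y⟫^2/16)) • rankOne y y) ≤ 1 - ⟪x, y⟫^4/64 := by
      apply Real.sSup_le
      · rintro r ⟨z, hz, rfl⟩
        rw [pair_inner]
        have hk := key_ineq x y z hx hy hz
        have ha : ⟪x, z⟫^2 ≤ 1 := inner_sq_le_one x z hx hz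
        have hb : ⟪y, z⟫^2 ≤ 1 := inner_sq_le_one y z hy hz
        have := num_ineq ⟪x, z⟫ ⟪y, z⟫ ⟪x, y⟫ ha hb hcc hk
        calc |⟪x, z⟫^2 + -(⟪x, y⟫^2/16) * ⟪y, z⟫^2|
            = |⟪x, z⟫^2 - ⟪x, y⟫^2/16 * ⟪y, z⟫^2| := by ring_nf
          _ ≤ 1 - ⟪x, y⟫^4/64 := this
      · nlinarith [sq_nonneg (⟪x, y⟫^2)]
    nlinarith [sq_nonneg (⟪x, y⟫^2)]
  · intro h0 l
    rw [numRadius_rankOne_self x hx]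
    have hyx : ⟪y, x⟫ = 0 := by rw [real_inner_comm]; exact h0
    have hxx : ⟪x, x⟫ = 1 := by rw [real_inner_self_eq_norm_sq, hx]; norm_num
    apply le_csSup
    · refine ⟨1 + |l|, ?_⟩
      rintro r ⟨z, hz, rfl⟩
      rw [pair_inner]
      have ha : ⟪x, z⟫^2 ≤ 1 := inner_sq_le_one x z hx hz
      have hb : ⟪y, z⟫^2 ≤ 1 := inner_sq_le_one y z hy hz
      calc |⟪x, z⟫^2 + l * ⟪y, z⟫^2| ≤ |⟪x, z⟫^2| + |l * ⟪y, z⟫^2| := abs_add_le _ _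
        _ = ⟪x, z⟫^2 + |l| * ⟪y, z⟫^2 := by
            rw [abs_mul, abs_of_nonneg (sq_nonneg (⟪x, z⟫:ℝ)), abs_of_nonneg (sq_nonneg (⟪y, z⟫:ℝ))]
        _ ≤ 1 + |l| * 1 := by
            have : |l| * ⟪y, z⟫^2 ≤ |l| * 1 := mul_le_mul_of_nonneg_left hb (abs_nonneg l)
            linarith
        _ = 1 + |l| := by ring
    · exact ⟨x, hx, by rw [pair_inner, hxx, hyx]; norm_num⟩
end

section
/- Let H be a real Hilbert space and T a compact linear operator on H. Then w(T) = 0 if and only if for every unit vector x, the rank-one projection x⊗x is numerical-radius orthogonal to T. -/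
open scoped RealInnerProductSpace

section Aux
variable {E : Type*} [NormedAddCommGroup E] [InnerProductSpace ℝ E]

lemma inner_le_opNorm' (T : E →L[ℝ] E) {z : E} (hz : ‖z‖ = 1) :
    |⟪T z, z⟫| ≤ ‖T‖ := by
  calc |⟪T z, z⟫| ≤ ‖T z‖ * ‖z‖ := abs_real_inner_le_norm _ _
  _ ≤ (‖T‖ * ‖z‖) * ‖z‖ :=
      mul_le_mul_of_nonneg_right (T.le_opNorm z) (norm_nonneg z)
  _ = ‖T‖ := by rw [hz]; ring

lemma bddAbove_nr (T : E →L[ℝ] E) :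
    BddAbove {r : ℝ | ∃ x : E, ‖x‖ = 1 ∧ r = |⟪T x, x⟫|} := by
  refine ⟨‖T‖, ?_⟩
  rintro r ⟨z, hz, rfl⟩
  exact inner_le_opNorm' T hz

lemma numRadius_le (T : E →L[ℝ] E) {b : ℝ} (hb : 0 ≤ b)
    (h : ∀ z : E, ‖z‖ = 1 → |⟪T z, z⟫| ≤ b) : numRadius T ≤ b := by
  apply Real.sSup_le _ hb
  rintro r ⟨z, hz, rfl⟩
  exact h z hz

lemma le_numRadius (T : E →L[ℝ] E) {z : E} (hz : ‖z‖ = 1) :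
    |⟪T z, z⟫| ≤ numRadius T :=
  le_csSup (bddAbove_nr T) ⟨z, hz, rfl⟩

lemma numRadius_congr (A B : E →L[ℝ] E)
    (h : ∀ z : E, ‖z‖ = 1 → ⟪A z, z⟫ = ⟪B z, z⟫) : numRadius A = numRadius B := by
  unfold numRadius
  congr 1
  ext r
  constructor <;> rintro ⟨z, hz, rfl⟩ <;> exact ⟨z, hz, by rw [h z hz]⟩

lemma rankOne_inner_s13 (x z : E) : ⟪rankOne x x z, z⟫ = ⟪x, z⟫ ^ 2 := by
  simp [rankOne, real_inner_smul_left, sq]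

lemma numRadius_rankOne {x : E} (hx : ‖x‖ = 1) : numRadius (rankOne x x) = 1 := by
  apply le_antisymm
  · apply numRadius_le _ zero_le_one
    intro z hz
    rw [rankOne_inner_s13, abs_pow, sq_abs]
    calc ⟪x, z⟫ ^ 2 ≤ (‖x‖ * ‖z‖) ^ 2 := by
          have := abs_real_inner_le_norm x z
          nlinarith [abs_nonneg ⟪x, z⟫, sq_abs ⟪x, z⟫]
      _ = 1 := by rw [hx, hz]; norm_num
  · have := le_numRadius (rankOne x x) hx
    rw [rankOne_inner_s13, real_inner_self_eq_norm_sq, hx] at this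
    simpa using this

lemma inner_lip (T : E →L[ℝ] E) {z w : E} (hz : ‖z‖ = 1) (hw : ‖w‖ = 1) :
    |⟪T z, z⟫ - ⟪T w, w⟫| ≤ 2 * ‖T‖ * ‖z - w‖ := by
  have key : ⟪T z, z⟫ - ⟪T w, w⟫ = ⟪T (z - w), z⟫ + ⟪T w, z - w⟫ := by
    rw [map_sub, inner_sub_left, inner_sub_right]; ring
  rw [key]
  calc |⟪T (z - w), z⟫ + ⟪T w, z - w⟫| ≤ |⟪T (z - w), z⟫| + |⟪T w, z - w⟫| := abs_add_le _ _
  _ ≤ ‖T (z - w)‖ * ‖z‖ + ‖T w‖ * ‖z - w‖ :=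
      add_le_add (abs_real_inner_le_norm _ _) (abs_real_inner_le_norm _ _)
  _ ≤ (‖T‖ * ‖z - w‖) * 1 + (‖T‖ * ‖w‖) * ‖z - w‖ := by
      rw [hz]
      exact add_le_add (mul_le_mul_of_nonneg_right (T.le_opNorm _) zero_le_one)
        (mul_le_mul_of_nonneg_right (T.le_opNorm _) (norm_nonneg _))
  _ = 2 * ‖T‖ * ‖z - w‖ := by rw [hw]; ring

lemma numRadius_nonneg (T : E →L[ℝ] E) : 0 ≤ numRadius T := by
  by_cases hs : ({r : ℝ | ∃ x : E, ‖x‖ = 1 ∧ r = |⟪T x, x⟫|}).Nonempty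
  · obtain ⟨r, z, hz, rfl⟩ := hs
    exact le_trans (abs_nonneg _) (le_numRadius T hz)
  · unfold numRadius
    rw [Set.not_nonempty_iff_eq_empty.mp hs, Real.sSup_empty]
end Aux

set_option maxHeartbeats 1600000 in
theorem stmt13 {H : Type*} [NormedAddCommGroup H] [InnerProductSpace ℝ H] [CompleteSpace H]
    (T : H →L[ℝ] H) (hT : IsCompactOperator T) :
    numRadius T = 0 ↔ ∀ x : H, ‖x‖ = 1 → nrOrth (rankOne x x) T := by
  constructor
  · intro h0 x hx l
    have hzero : ∀ z : H, ‖z‖ = 1 → ⟪T z, z⟫ = 0 := by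
      intro z hz
      have h1 := le_numRadius T hz
      rw [h0] at h1
      exact abs_nonpos_iff.mp h1
    have heq : numRadius (rankOne x x + l • T) = numRadius (rankOne x x) := by
      apply numRadius_congr
      intro z hz
      rw [ContinuousLinearMap.add_apply, inner_add_left, ContinuousLinearMap.smul_apply,
        real_inner_smul_left, hzero z hz]
      ring
    rw [heq]
  · intro h
    by_contra hne
    have hex : ∃ x : H, ‖x‖ = 1 ∧ ⟪T x, x⟫ ≠ 0 := by
      by_contra hall
      push_neg at hall
      apply hne
      apply le_antisymm
      · apply numRadius_le T le_rfl
        intro z hz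
        rw [hall z hz]
        simp
      · exact numRadius_nonneg T
    obtain ⟨x, hx, hc⟩ := hex
    obtain ⟨c, hcdef⟩ : ∃ c : ℝ, ⟪T x, x⟫ = c := ⟨_, rfl⟩
    rw [hcdef] at hc
    have hc0 : 0 < |c| := abs_pos.mpr hc
    obtain ⟨M, hTM, hM1⟩ : ∃ M : ℝ, ‖T‖ ≤ M ∧ 1 ≤ M :=
      ⟨max ‖T‖ 1, le_max_left _ _, le_max_right _ _⟩
    have hM0 : (0:ℝ) < M := lt_of_lt_of_le one_pos hM1
    obtain ⟨δ, hδ0, hδ1, hδ2⟩ : ∃ δ : ℝ, 0 < δ ∧ δ ≤ 1 ∧ δ ≤ c ^ 2 / (32 * M ^ 2) :=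
      ⟨min 1 (c ^ 2 / (32 * M ^ 2)), lt_min one_pos (by positivity),
        min_le_left _ _, min_le_right _ _⟩
    obtain ⟨t, ht0, htcM⟩ : ∃ t : ℝ, 0 < t ∧ t * |c| * M = δ / 2 :=
      ⟨δ / (2 * |c| * M), by positivity, by field_simp⟩
    obtain ⟨ε, hε0, hεle1, hεle2⟩ : ∃ ε : ℝ, 0 < ε ∧ ε ≤ t * c ^ 2 / 2 ∧ ε ≤ δ / 2 :=
      ⟨min (t * c ^ 2 / 2) (δ / 2), lt_min (by positivity) (by positivity),
        min_le_left _ _, min_le_right _ _⟩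
    obtain ⟨q, hq0, hq2, hq3⟩ : ∃ q : ℝ, 0 < q ∧ 2 * δ ≤ q ^ 2 ∧ 2 * M * q ≤ |c| / 2 := by
      refine ⟨|c| / (4 * M), by positivity, ?_, ?_⟩
      · have heq : (|c| / (4 * M)) ^ 2 = c ^ 2 / (16 * M ^ 2) := by
          rw [div_pow, sq_abs]; ring_nf
        rw [heq]
        calc 2 * δ ≤ 2 * (c ^ 2 / (32 * M ^ 2)) := by linarith
          _ = c ^ 2 / (16 * M ^ 2) := by ring
      · have heq : 2 * M * (|c| / (4 * M)) = |c| / 2 := by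
          field_simp
          ring
        exact le_of_eq heq
    have claim : ∀ z : H, ‖z‖ = 1 →
        |⟪(rankOne x x + (-(t * c)) • T) z, z⟫| ≤ 1 - ε := by
      intro z hz
      have hinner : ⟪(rankOne x x + (-(t * c)) • T) z, z⟫
          = ⟪x, z⟫ ^ 2 + (-(t * c)) * ⟪T z, z⟫ := by
        rw [ContinuousLinearMap.add_apply, inner_add_left, rankOne_inner_s13,
          ContinuousLinearMap.smul_apply, real_inner_smul_left]
      obtain ⟨a, hadef⟩ : ∃ a : ℝ, ⟪x, z⟫ = a := ⟨_, rfl⟩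
      obtain ⟨s, hsdef⟩ : ∃ s : ℝ, ⟪T z, z⟫ = s := ⟨_, rfl⟩
      rw [hadef, hsdef] at hinner
      rw [hinner]
      have haz : a ^ 2 ≤ 1 := by
        have h1 := abs_real_inner_le_norm x z
        rw [hx, hz, hadef] at h1
        nlinarith [sq_abs a, abs_nonneg a]
      have hTzM : |s| ≤ M := by
        rw [← hsdef]; exact (inner_le_opNorm' T hz).trans hTM
      have habs : |t * c * s| ≤ δ / 2 := by
        rw [abs_mul, abs_mul, abs_of_pos ht0]
        calc t * |c| * |s| ≤ t * |c| * M :=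
              mul_le_mul_of_nonneg_left hTzM (by positivity)
          _ = δ / 2 := htcM
      rw [abs_le]
      constructor
      · linarith [le_abs_self (t * c * s), habs, sq_nonneg a]
      · by_cases h2 : a ^ 2 ≤ 1 - δ
        · linarith [neg_le_abs (t * c * s), habs]
        · push_neg at h2
          have haa : 1 - δ ≤ |a| := by
            nlinarith [sq_abs a, abs_nonneg a]
          obtain ⟨σ, hσabs, hσ1, hσa⟩ : ∃ σ : ℝ, |σ| = 1 ∧ σ ^ 2 = 1 ∧ σ * a = |a| := by
            rcases le_or_gt 0 a with hpos | hneg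
            · exact ⟨1, by norm_num, by norm_num, by rw [abs_of_nonneg hpos]; ring⟩
            · exact ⟨-1, by norm_num, by norm_num, by rw [abs_of_neg hneg]; ring⟩
          have hw : ‖σ • x‖ = 1 := by
            rw [norm_smul, Real.norm_eq_abs, hσabs, hx]; norm_num
          have hzw2 : ‖z - σ • x‖ ^ 2 ≤ 2 * δ := by
            have hexp : ‖z - σ • x‖ ^ 2 = ‖z‖ ^ 2 - 2 * ⟪z, σ • x⟫ + ‖σ • x‖ ^ 2 := by
              rw [@norm_sub_sq_real]
            have hzwinner : ⟪z, σ • x⟫ = |a| := by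
              rw [real_inner_smul_right, ← hσa, real_inner_comm, hadef]
            rw [hexp, hzwinner, hz, hw]
            nlinarith
          have hzwle : ‖z - σ • x‖ ≤ q := by
            nlinarith [norm_nonneg (z - σ • x)]
          have hTww : ⟪T (σ • x), σ • x⟫ = c := by
            rw [map_smul, real_inner_smul_left, real_inner_smul_right, hcdef]
            calc σ * (σ * c) = σ ^ 2 * c := by ring
              _ = c := by rw [hσ1]; ring
          have he2 : |s - c| ≤ |c| / 2 := by
            have h1 := inner_lip T hz hw
            rw [hTww, hsdef] at h1
            calc |s - c| ≤ 2 * ‖T‖ * ‖z - σ • x‖ := h1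
              _ ≤ 2 * M * ‖z - σ • x‖ := by
                  apply mul_le_mul_of_nonneg_right _ (norm_nonneg _)
                  linarith
              _ ≤ 2 * M * q := mul_le_mul_of_nonneg_left hzwle (by positivity)
              _ ≤ |c| / 2 := hq3
          have hkey : -(c ^ 2 / 2) ≤ c * (s - c) := by
            have h1 : |c * (s - c)| ≤ |c| * (|c| / 2) := by
              rw [abs_mul]
              exact mul_le_mul_of_nonneg_left he2 (abs_nonneg c)
            have h2 := neg_abs_le (c * (s - c))
            nlinarith [sq_abs c]
          have hkey2 : -(t * (c ^ 2 / 2)) ≤ t * (c * (s - c)) := by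
            have h3 := mul_le_mul_of_nonneg_left hkey ht0.le
            linarith
          nlinarith
    have hle : numRadius (rankOne x x + (-(t * c)) • T) ≤ 1 - ε := by
      apply numRadius_le _ _ claim
      linarith
    have hfin := h x hx (-(t * c))
    rw [numRadius_rankOne hx] at hfin
    linarith
end
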